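/- Let K be a field of characteristic zero, R = K[x,y,z], and let a ≥ b ≥ 2 and β be integers with 1 ≤ β ≤ min{a−b+1, b−1}. Then the quotient of R by the ideal I_β = (x^a, y^b − x^{b−1} z, z^2, x^{a−b+1} y^{b−β}, y^{b−β} z) has the weak Lefschetz property. -/

import Mathlib

open MvPolynomial

/-- The degree-`i` graded component of `R/I`, i.e. the image in `R/I` of the
space of homogeneous polynomials of degree `i`. -/
noncomputable def grComponent (K : Type*) [Field K]
    (I : Ideal (MvPolynomial (Fin 3) K)) (i : ℕ) :
    Submodule K (MvPolynomial (Fin 3) K ⧸ I) :=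
  (MvPolynomial.homogeneousSubmodule (Fin 3) K i).map
    (Ideal.Quotient.mkₐ K I).toLinearMap

/-- The Hilbert function of `R/I`. -/
noncomputable def hilb (K : Type*) [Field K]
    (I : Ideal (MvPolynomial (Fin 3) K)) (i : ℕ) : ℕ :=
  Module.finrank K (grComponent K I i)

/-- `R/I` has the weak Lefschetz property: there is a linear form `L` such that
for every `i`, multiplication by `L` from `[R/I]_i` to `[R/I]_{i+1}` is
injective or surjective. -/
def hasWLP (K : Type*) [Field K] (I : Ideal (MvPolynomial (Fin 3) K)) : Prop :=
  ∃ L : MvPolynomial (Fin 3) K, L.IsHomogeneous 1 ∧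
    ∀ i : ℕ,
      (∀ u ∈ grComponent K I i, ∀ v ∈ grComponent K I i,
          Ideal.Quotient.mk I L * u = Ideal.Quotient.mk I L * v → u = v) ∨
      (∀ w ∈ grComponent K I (i + 1), ∃ u ∈ grComponent K I i,
          Ideal.Quotient.mk I L * u = w)


namespace StmtAux

variable {K : Type*} [Field K]

private lemma deg3 (v : Fin 3 →₀ ℕ) : v.degree = v 0 + v 1 + v 2 := by
  rw [Finsupp.degree, ← Fin.sum_univ_three (fun i => v i)]
  exact Finset.sum_subset (Finset.subset_univ _)
    (fun i _ hi => Finsupp.notMem_support_iff.mp hi)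

private lemma degadd (x y : Fin 3 →₀ ℕ) : (x + y).degree = x.degree + y.degree := by
  simp only [deg3, Finsupp.add_apply]; ring

private lemma hc_zero {g : MvPolynomial (Fin 3) K} {e : ℕ} (hg : g.IsHomogeneous e)
    (r : MvPolynomial (Fin 3) K) {d : ℕ} (hd : d < e) :
    homogeneousComponent d (r * g) = 0 := by
  ext μ
  rw [coeff_homogeneousComponent, coeff_zero]
  split_ifs with h
  · rw [coeff_mul]
    refine Finset.sum_eq_zero fun x hx => ?_
    rw [Finset.HasAntidiagonal.mem_antidiagonal] at hx
    have hsum : x.1.degree + x.2.degree = d := by rw [← degadd, hx, h]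
    have hdeg : x.2.degree ≠ e := by omega
    rw [hg.coeff_eq_zero hdeg, mul_zero]
  · rfl

private lemma hc_mul {g : MvPolynomial (Fin 3) K} {e : ℕ} (hg : g.IsHomogeneous e)
    (r : MvPolynomial (Fin 3) K) {d : ℕ} (hd : e ≤ d) :
    homogeneousComponent d (r * g) = homogeneousComponent (d - e) r * g := by
  ext μ
  simp only [coeff_homogeneousComponent, coeff_mul]
  split_ifs with h
  · refine Finset.sum_congr rfl fun x hx => ?_
    rw [Finset.HasAntidiagonal.mem_antidiagonal] at hx
    by_cases hg2 : coeff x.2 g = 0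
    · rw [hg2, mul_zero, mul_zero]
    · have he : x.2.degree = e := by
        by_contra hne; exact hg2 (hg.coeff_eq_zero hne)
      have hsum : x.1.degree + x.2.degree = d := by rw [← degadd, hx, h]
      have : x.1.degree = d - e := by omega
      rw [if_pos this]
  · symm
    refine Finset.sum_eq_zero fun x hx => ?_
    rw [Finset.HasAntidiagonal.mem_antidiagonal] at hx
    by_cases hg2 : coeff x.2 g = 0
    · rw [hg2, mul_zero]
    · have he : x.2.degree = e := by
        by_contra hne; exact hg2 (hg.coeff_eq_zero hne)
      have hsum : x.1.degree + x.2.degree = μ.degree := by rw [← degadd, hx]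
      have : x.1.degree ≠ d - e := by omega
      rw [if_neg this, zero_mul]

private lemma homog3 (c : K) (p q r n : ℕ) (h : p + q + r = n) :
    (C c * (X 0 ^ p * (X 1 ^ q * X 2 ^ r)) : MvPolynomial (Fin 3) K).IsHomogeneous n := by
  have := ((isHomogeneous_X_pow (R := K) (0 : Fin 3) p).mul
    ((isHomogeneous_X_pow (R := K) (1 : Fin 3) q).mul
      (isHomogeneous_X_pow (R := K) (2 : Fin 3) r))).C_mul c
  rwa [← add_assoc, h] at this

private lemma key_mono (a b β i : ℕ) (hb : 2 ≤ b) (hβ1 : 1 ≤ β) (hβb : β ≤ b - 1)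
    (hi : b ≤ i + 1) (v : Fin 3 →₀ ℕ) (hv : v 0 + v 1 + v 2 = i + 1) (c : K) :
    ∃ g : MvPolynomial (Fin 3) K, g.IsHomogeneous i ∧
      (monomial v c : MvPolynomial (Fin 3) K) - X 0 * g ∈
        Ideal.span {(X 0 : MvPolynomial (Fin 3) K) ^ a,
          X 1 ^ b - X 0 ^ (b - 1) * X 2, X 2 ^ 2,
          X 0 ^ (a - b + 1) * X 1 ^ (b - β), X 1 ^ (b - β) * X 2} := by
  have hmono : (monomial v c : MvPolynomial (Fin 3) K)
      = C c * (X 0 ^ (v 0) * (X 1 ^ (v 1) * X 2 ^ (v 2))) := by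
    rw [monomial_eq, Finsupp.prod_pow, Fin.prod_univ_three]
    ring
  rcases Nat.eq_zero_or_pos (v 0) with hp | hp
  · -- v 0 = 0
    rcases Nat.lt_or_ge (v 2) 2 with hr2 | hr2
    · rcases Nat.eq_zero_or_pos (v 2) with hr | hr
      · -- v 2 = 0, v 1 = i + 1 ≥ b
        obtain ⟨s, hs⟩ : ∃ s, v 1 = s + b := ⟨v 1 - b, by omega⟩
        refine ⟨C c * (X 0 ^ (b - 2) * (X 1 ^ s * X 2 ^ 1)),
          homog3 _ _ _ _ _ (by omega), ?_⟩
        have heq : (monomial v c : MvPolynomial (Fin 3) K)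
            - X 0 * (C c * (X 0 ^ (b - 2) * (X 1 ^ s * X 2 ^ 1)))
            = (C c * X 1 ^ s) * (X 1 ^ b - X 0 ^ (b - 1) * X 2) := by
          rw [hmono, hp, hr, hs, show b - 1 = (b - 2) + 1 by omega]
          ring
        rw [heq, show b - 1 = (b - 2) + 1 by omega]
        refine Ideal.mul_mem_left _ _ (Ideal.subset_span ?_)
        simp only [Set.mem_insert_iff, Set.mem_singleton_iff]; tauto
      · -- v 2 = 1
        have hr : v 2 = 1 := by omega
        obtain ⟨s, hs⟩ : ∃ s, v 1 = s + (b - β) := ⟨v 1 - (b - β), by omega⟩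
        refine ⟨0, isHomogeneous_zero _ _ _, ?_⟩
        have heq : (monomial v c : MvPolynomial (Fin 3) K) - X 0 * 0
            = (C c * X 1 ^ s) * (X 1 ^ (b - β) * X 2) := by
          rw [hmono, hp, hr, hs]
          ring
        rw [heq]
        refine Ideal.mul_mem_left _ _ (Ideal.subset_span ?_)
        simp only [Set.mem_insert_iff, Set.mem_singleton_iff]; tauto
    · -- v 2 ≥ 2
      obtain ⟨s, hs⟩ : ∃ s, v 2 = s + 2 := ⟨v 2 - 2, by omega⟩
      refine ⟨0, isHomogeneous_zero _ _ _, ?_⟩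
      have heq : (monomial v c : MvPolynomial (Fin 3) K) - X 0 * 0
          = (C c * (X 1 ^ (v 1) * X 2 ^ s)) * (X 2 ^ 2) := by
        rw [hmono, hp, hs]
        ring
      rw [heq]
      refine Ideal.mul_mem_left _ _ (Ideal.subset_span ?_)
      simp only [Set.mem_insert_iff, Set.mem_singleton_iff]; tauto
  · -- v 0 ≥ 1
    obtain ⟨p', hp'⟩ : ∃ p', v 0 = p' + 1 := ⟨v 0 - 1, by omega⟩
    refine ⟨C c * (X 0 ^ p' * (X 1 ^ (v 1) * X 2 ^ (v 2))),
      homog3 _ _ _ _ _ (by omega), ?_⟩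
    have heq : (monomial v c : MvPolynomial (Fin 3) K)
        - X 0 * (C c * (X 0 ^ p' * (X 1 ^ (v 1) * X 2 ^ (v 2)))) = 0 := by
      rw [hmono, hp']
      ring
    rw [heq]
    exact zero_mem _

private lemma key_surj (a b β i : ℕ) (hb : 2 ≤ b) (hβ1 : 1 ≤ β) (hβb : β ≤ b - 1)
    (hi : b ≤ i + 1) (f : MvPolynomial (Fin 3) K) (hf : f.IsHomogeneous (i + 1)) :
    ∃ g : MvPolynomial (Fin 3) K, g.IsHomogeneous i ∧
      f - X 0 * g ∈
        Ideal.span {(X 0 : MvPolynomial (Fin 3) K) ^ a,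
          X 1 ^ b - X 0 ^ (b - 1) * X 2, X 2 ^ 2,
          X 0 ^ (a - b + 1) * X 1 ^ (b - β), X 1 ^ (b - β) * X 2} := by
  classical
  set I := Ideal.span {(X 0 : MvPolynomial (Fin 3) K) ^ a,
    X 1 ^ b - X 0 ^ (b - 1) * X 2, X 2 ^ 2,
    X 0 ^ (a - b + 1) * X 1 ^ (b - β), X 1 ^ (b - β) * X 2} with hIdef
  have Hs : ∀ v ∈ f.support, ∃ g : MvPolynomial (Fin 3) K, g.IsHomogeneous i ∧
      (monomial v (coeff v f) : MvPolynomial (Fin 3) K) - X 0 * g ∈ I := by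
    intro v hv
    apply key_mono a b β i hb hβ1 hβb hi
    have hne := MvPolynomial.mem_support_iff.mp hv
    rw [← deg3 v, Finsupp.degree_eq_weight_one]
    exact hf hne
  have hsum := Finset.sum_induction
    (fun v => (monomial v (coeff v f) : MvPolynomial (Fin 3) K))
    (fun q => ∃ g : MvPolynomial (Fin 3) K, g.IsHomogeneous i ∧ q - X 0 * g ∈ I)
    (by
      rintro p q ⟨gp, hgp, hp⟩ ⟨gq, hgq, hq⟩
      refine ⟨gp + gq, hgp.add hgq, ?_⟩
      have : p + q - X 0 * (gp + gq) = (p - X 0 * gp) + (q - X 0 * gq) := by ring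
      rw [this]; exact Ideal.add_mem _ hp hq)
    ⟨0, isHomogeneous_zero _ _ _, by simpa using I.zero_mem⟩ Hs
  rwa [← as_sum f] at hsum

private lemma low_deg (a b β d : ℕ) (hb : 2 ≤ b) (hab : b ≤ a) (hβ1 : 1 ≤ β)
    (hβa : β ≤ a - b + 1) (hβb : β ≤ b - 1) (hd : d < b)
    {p : MvPolynomial (Fin 3) K} (hp : p.IsHomogeneous d)
    (hmem : p ∈ Ideal.span {(X 0 : MvPolynomial (Fin 3) K) ^ a,
      X 1 ^ b - X 0 ^ (b - 1) * X 2, X 2 ^ 2,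
      X 0 ^ (a - b + 1) * X 1 ^ (b - β), X 1 ^ (b - β) * X 2}) :
    p ∈ Ideal.span {(X 2 : MvPolynomial (Fin 3) K) ^ 2, X 1 ^ (b - β) * X 2} := by
  obtain ⟨r1, z1, hz1, rfl⟩ := Ideal.mem_span_insert.mp hmem
  obtain ⟨r2, z2, hz2, rfl⟩ := Ideal.mem_span_insert.mp hz1
  obtain ⟨r3, z3, hz3, rfl⟩ := Ideal.mem_span_insert.mp hz2
  obtain ⟨r4, z4, hz4, rfl⟩ := Ideal.mem_span_insert.mp hz3
  obtain ⟨r5, rfl⟩ := Ideal.mem_span_singleton.mp hz4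
  set J := Ideal.span {(X 2 : MvPolynomial (Fin 3) K) ^ 2, X 1 ^ (b - β) * X 2} with hJdef
  have hg1 : ((X 0 : MvPolynomial (Fin 3) K) ^ a).IsHomogeneous a :=
    isHomogeneous_X_pow _ _
  have hg2 : ((X 1 : MvPolynomial (Fin 3) K) ^ b - X 0 ^ (b - 1) * X 2).IsHomogeneous b := by
    refine (isHomogeneous_X_pow _ _).sub ?_
    have := (isHomogeneous_X_pow (R := K) (0 : Fin 3) (b - 1)).mul
      (isHomogeneous_X K (2 : Fin 3))
    rwa [show b - 1 + 1 = b by omega] at this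
  have hg3 : ((X 2 : MvPolynomial (Fin 3) K) ^ 2).IsHomogeneous 2 :=
    isHomogeneous_X_pow _ _
  have hg4 : ((X 0 : MvPolynomial (Fin 3) K) ^ (a - b + 1)
      * X 1 ^ (b - β)).IsHomogeneous ((a - b + 1) + (b - β)) :=
    (isHomogeneous_X_pow _ _).mul (isHomogeneous_X_pow _ _)
  have hg5 : ((X 1 : MvPolynomial (Fin 3) K) ^ (b - β) * X 2).IsHomogeneous ((b - β) + 1) :=
    (isHomogeneous_X_pow _ _).mul (isHomogeneous_X _ _)
  have hpd : homogeneousComponent d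
      (r1 * X 0 ^ a + (r2 * (X 1 ^ b - X 0 ^ (b - 1) * X 2)
        + (r3 * X 2 ^ 2 + (r4 * (X 0 ^ (a - b + 1) * X 1 ^ (b - β))
          + X 1 ^ (b - β) * X 2 * r5))))
      = r1 * X 0 ^ a + (r2 * (X 1 ^ b - X 0 ^ (b - 1) * X 2)
        + (r3 * X 2 ^ 2 + (r4 * (X 0 ^ (a - b + 1) * X 1 ^ (b - β))
          + X 1 ^ (b - β) * X 2 * r5))) := by
    rw [homogeneousComponent_of_mem (((mem_homogeneousSubmodule _ _).mpr hp)), if_pos rfl]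
  have m3 : homogeneousComponent d (r3 * X 2 ^ 2) ∈ J := by
    rcases le_or_gt 2 d with h | h
    · rw [hc_mul hg3 r3 h]
      exact Ideal.mul_mem_left _ _ (Ideal.subset_span (Set.mem_insert _ _))
    · rw [hc_zero hg3 r3 h]; exact zero_mem _
  have m5 : homogeneousComponent d (r5 * (X 1 ^ (b - β) * X 2)) ∈ J := by
    rcases le_or_gt ((b - β) + 1) d with h | h
    · rw [hc_mul hg5 r5 h]
      exact Ideal.mul_mem_left _ _
        (Ideal.subset_span (Set.mem_insert_iff.mpr (Or.inr rfl)))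
    · rw [hc_zero hg5 r5 h]; exact zero_mem _
  rw [← hpd, map_add, map_add, map_add, map_add,
    hc_zero hg1 r1 (by omega), hc_zero hg2 r2 hd,
    hc_zero hg4 r4 (by omega), mul_comm (X 1 ^ (b - β) * X 2) r5]
  simpa using J.add_mem m3 m5

private lemma colon (m : ℕ) (h : MvPolynomial (Fin 3) K)
    (hm : X 0 * h ∈ Ideal.span {(X 2 : MvPolynomial (Fin 3) K) ^ 2, X 1 ^ m * X 2}) :
    h ∈ Ideal.span {(X 2 : MvPolynomial (Fin 3) K) ^ 2, X 1 ^ m * X 2} := by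
  obtain ⟨p, q, hpq⟩ := Ideal.mem_span_pair.mp hm
  set ψ := MvPolynomial.finSuccEquiv K 2 with hψdef
  have hX1 : ψ (X 1) = Polynomial.C (X 0) := by
    rw [show (1 : Fin 3) = Fin.succ 0 by decide, finSuccEquiv_X_succ]
  have hX2 : ψ (X 2) = Polynomial.C (X 1) := by
    rw [show (2 : Fin 3) = Fin.succ 1 by decide, finSuccEquiv_X_succ]
  have hX0 : ψ (X 0) = Polynomial.X := by rw [hψdef]; exact finSuccEquiv_X_zero
  have H := congrArg ψ hpq
  simp only [map_add, map_mul, map_pow, hX0, hX1, hX2] at H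
  rw [← Polynomial.C_pow, ← Polynomial.C_pow, ← Polynomial.C_mul] at H
  have hdiv : ∀ P : Polynomial (MvPolynomial (Fin 2) K), (Polynomial.X * P).divX = P := by
    intro P; ext n; rw [Polynomial.coeff_divX, Polynomial.coeff_X_mul]
  have key : ψ h = Polynomial.C ((X 1 : MvPolynomial (Fin 2) K) ^ 2) * (ψ p).divX
      + Polynomial.C ((X 0 : MvPolynomial (Fin 2) K) ^ m * X 1) * (ψ q).divX := by
    rw [← hdiv (ψ h), ← H, Polynomial.divX_add, mul_comm (ψ p), mul_comm (ψ q),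
      Polynomial.divX_C_mul, Polynomial.divX_C_mul]
  have e1 : ψ ((X 2 : MvPolynomial (Fin 3) K) ^ 2)
      = Polynomial.C ((X 1 : MvPolynomial (Fin 2) K) ^ 2) := by
    rw [map_pow, hX2, ← Polynomial.C_pow]
  have e2 : ψ ((X 1 : MvPolynomial (Fin 3) K) ^ m * X 2)
      = Polynomial.C ((X 0 : MvPolynomial (Fin 2) K) ^ m * X 1) := by
    rw [map_mul, map_pow, hX1, hX2, ← Polynomial.C_pow, ← Polynomial.C_mul]
  have hback : h = X 2 ^ 2 * ψ.symm ((ψ p).divX)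
      + (X 1 ^ m * X 2) * ψ.symm ((ψ q).divX) := by
    apply ψ.injective
    rw [key, map_add, map_mul ψ, map_mul ψ, e1, e2, AlgEquiv.apply_symm_apply,
      AlgEquiv.apply_symm_apply]
  rw [hback]
  exact Ideal.add_mem _
    (Ideal.mul_mem_right _ _ (Ideal.subset_span (Set.mem_insert _ _)))
    (Ideal.mul_mem_right _ _ (Ideal.subset_span (Set.mem_insert_iff.mpr (Or.inr rfl))))

end StmtAux

theorem stmt_8 (K : Type*) [Field K] [CharZero K] (a b β : ℕ)
    (hb : 2 ≤ b) (hab : b ≤ a) (hβ1 : 1 ≤ β)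
    (hβ2 : β ≤ min (a - b + 1) (b - 1)) :
    hasWLP K (Ideal.span {(X 0 : MvPolynomial (Fin 3) K) ^ a,
      X 1 ^ b - X 0 ^ (b - 1) * X 2, X 2 ^ 2,
      X 0 ^ (a - b + 1) * X 1 ^ (b - β), X 1 ^ (b - β) * X 2}) := by
  have hβa : β ≤ a - b + 1 := le_trans hβ2 (min_le_left _ _)
  have hβb : β ≤ b - 1 := le_trans hβ2 (min_le_right _ _)
  set I := Ideal.span {(X 0 : MvPolynomial (Fin 3) K) ^ a,
    X 1 ^ b - X 0 ^ (b - 1) * X 2, X 2 ^ 2,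
    X 0 ^ (a - b + 1) * X 1 ^ (b - β), X 1 ^ (b - β) * X 2} with hIdef
  refine ⟨X 0, isHomogeneous_X _ _, fun i => ?_⟩
  by_cases hi : b ≤ i + 1
  · right
    rintro w hw
    simp only [grComponent, Submodule.mem_map, AlgHom.toLinearMap_apply,
      Ideal.Quotient.mkₐ_eq_mk, mem_homogeneousSubmodule] at hw
    obtain ⟨f, hf, rfl⟩ := hw
    obtain ⟨g, hg, hmem⟩ := StmtAux.key_surj a b β i hb hβ1 hβb hi f hf
    refine ⟨Ideal.Quotient.mk I g, ?_, ?_⟩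
    · simp only [grComponent, Submodule.mem_map, AlgHom.toLinearMap_apply,
        Ideal.Quotient.mkₐ_eq_mk, mem_homogeneousSubmodule]
      exact ⟨g, hg, rfl⟩
    · rw [← map_mul]
      refine (Ideal.Quotient.eq).mpr ?_
      have := I.neg_mem hmem
      rwa [neg_sub] at this
  · left
    rintro u hu v hv huv
    simp only [grComponent, Submodule.mem_map, AlgHom.toLinearMap_apply,
      Ideal.Quotient.mkₐ_eq_mk, mem_homogeneousSubmodule] at hu hv
    obtain ⟨f, hf, rfl⟩ := hu
    obtain ⟨f', hf', rfl⟩ := hv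
    have hsub : X 0 * f - X 0 * f' ∈ I := by
      refine (Ideal.Quotient.eq).mp ?_
      rw [map_mul, map_mul]
      exact huv
    have h1 : X 0 * (f - f') ∈ I := by rwa [mul_sub]
    have hhom : (f - f').IsHomogeneous i := hf.sub hf'
    have hXh : (X 0 * (f - f')).IsHomogeneous (i + 1) := by
      have := (isHomogeneous_X K (0 : Fin 3)).mul hhom
      rwa [add_comm 1 i] at this
    have hJ := StmtAux.low_deg a b β (i + 1) hb hab hβ1 hβa hβb (by omega) hXh h1
    have hcol := StmtAux.colon (b - β) (f - f') hJ
    have hsubI : Ideal.span {(X 2 : MvPolynomial (Fin 3) K) ^ 2, X 1 ^ (b - β) * X 2} ≤ I := by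
      rw [Ideal.span_le]
      intro x hx
      simp only [Set.mem_insert_iff, Set.mem_singleton_iff] at hx
      rcases hx with rfl | rfl <;>
        refine Ideal.subset_span ?_ <;>
        simp only [Set.mem_insert_iff, Set.mem_singleton_iff] <;> tauto
    exact (Ideal.Quotient.eq).mpr (hsubI hcol)
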